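/- Fix λ > 0 and β > 0, and let G(z) = (1/(2z(1+z)))·[1 − β + (2 + λβ)z − √((λβz)² − 2β(λ(1+β)+2)z + (β−1)²)] for real z > x₂, where x₂ = (1/(λ²β))[(1+β)λ + 2 + 2√(λ²β + λ(β+1) + 1)]. Then G is the Stieltjes transform of the probability measure with density p(x) = (1/(2π))·√(−(β−1)² + 2β[(1+β)λ+2]x − β²λ²x²)/(x(x+1)) on [x₁,x₂] plus an atom of mass max(1−β,0) at 0. -/

import Mathlib

open Real MeasureTheory intervalIntegral Set

set_option maxHeartbeats 1000000

lemma core_integrable {r s e : ℝ} (hr : 0 < r) (hs : 0 < s) (he : s ≤ e) :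
    IntervalIntegrable (fun u => Real.sqrt (r ^ 2 * (s ^ 2 - u ^ 2)) / (u + e)) volume (-s) s := by
  rcases he.lt_or_eq with h | h
  · apply ContinuousOn.intervalIntegrable
    apply ContinuousOn.div
    · fun_prop
    · fun_prop
    · intro u hu
      rw [uIcc_of_le (by linarith)] at hu
      have := hu.1
      nlinarith
  · -- e = s
    subst h
    rw [intervalIntegrable_iff_integrableOn_Ioc_of_le (by linarith)]
    have h1 : IntervalIntegrable (fun x : ℝ => x ^ (-(1/2 : ℝ))) volume 0 (2*s) :=
      intervalIntegrable_rpow' (by norm_num)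
    have h2 := h1.comp_add_right s
    rw [show (2*s - s) = s by ring, show (0 - s : ℝ) = -s by ring] at h2
    have h3 : IntervalIntegrable (fun u : ℝ => (r * Real.sqrt (s - u)) * (u + s) ^ (-(1/2 : ℝ)))
        volume (-s) s := by
      apply h2.continuousOn_mul
      fun_prop
    have h4 := h3.1
    apply h4.congr_fun ?_ measurableSet_Ioc
    intro u hu
    have hu1 : 0 < u + s := by have := hu.1; linarith
    have hu2 : 0 ≤ s - u := by have := hu.2; linarith
    have hsq : Real.sqrt (u + s) ≠ 0 := (Real.sqrt_pos.mpr hu1).ne'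
    show r * Real.sqrt (s - u) * (u + s) ^ (-(1/2 : ℝ)) = Real.sqrt (r ^ 2 * (s ^ 2 - u ^ 2)) / (u + s)
    rw [Real.rpow_neg hu1.le, ← Real.sqrt_eq_rpow]
    rw [show r ^ 2 * (s ^ 2 - u ^ 2) = r ^ 2 * ((s - u) * (u + s)) by ring,
      Real.sqrt_mul (sq_nonneg r), Real.sqrt_sq hr.le, Real.sqrt_mul hu2]
    rw [eq_comm, div_eq_iff (by positivity)]
    field_simp
    rw [Real.sq_sqrt hu1.le]

lemma core_value {r s e : ℝ} (hr : 0 < r) (hs : 0 < s) (he : s ≤ e) :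
    ∫ u in (-s)..s, Real.sqrt (r ^ 2 * (s ^ 2 - u ^ 2)) / (u + e)
      = π * r * (e - Real.sqrt (e ^ 2 - s ^ 2)) := by
  rcases he.lt_or_eq with h | h
  · -- s < e
    set k := Real.sqrt (e ^ 2 - s ^ 2) with hk
    have hk0 : 0 < k := Real.sqrt_pos.mpr (by nlinarith)
    have hk2 : k ^ 2 = e ^ 2 - s ^ 2 := Real.sq_sqrt (by nlinarith)
    set F : ℝ → ℝ := fun u => r * (Real.sqrt (s^2 - u^2) + e * Real.arcsin (u / s)
      - k * Real.arcsin ((s^2 + e*u) / (s*(u+e)))) with hF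
    have key : ∫ u in (-s)..s, Real.sqrt (r ^ 2 * (s ^ 2 - u ^ 2)) / (u + e) = F s - F (-s) := by
      apply integral_eq_sub_of_hasDeriv_right_of_le (by linarith)
      · -- continuity of F on Icc
        apply ContinuousOn.mul continuousOn_const
        apply ContinuousOn.sub
        · apply ContinuousOn.add (by fun_prop)
          exact (continuousOn_const.mul ((Real.continuous_arcsin.comp (by continuity)).continuousOn))
        · apply continuousOn_const.mul
          apply Real.continuous_arcsin.comp_continuousOn
          apply ContinuousOn.div (by fun_prop) (by fun_prop)
          intro u hu
          have := hu.1
          have : 0 < u + e := by linarith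
          positivity
      · -- derivative on Ioo
        intro u hu
        obtain ⟨hu1, hu2⟩ := hu
        have hT : 0 < s^2 - u^2 := by nlinarith
        have hue : 0 < u + e := by linarith
        have ht0 : 0 < Real.sqrt (s^2 - u^2) := Real.sqrt_pos.mpr hT
        set t := Real.sqrt (s^2 - u^2) with hts
        have ht2 : t ^ 2 = s ^ 2 - u ^ 2 := Real.sq_sqrt hT.le
        have h1 : HasDerivAt (fun u : ℝ => s^2 - u^2) (-(2*u)) u := by
          simpa using ((hasDerivAt_pow 2 u).const_sub (s^2))
        have h2 := h1.sqrt hT.ne'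
        have h3 : HasDerivAt (fun u : ℝ => u / s) (1/s) u := by
          simpa using (hasDerivAt_id u).div_const s
        have h4a : u / s ≠ -1 := by
          intro hc; rw [div_eq_iff hs.ne'] at hc; nlinarith
        have h4b : u / s ≠ 1 := by
          intro hc; rw [div_eq_iff hs.ne'] at hc; nlinarith
        have h5 := (Real.hasDerivAt_arcsin h4a h4b).comp u h3
        have hden : s * (u + e) ≠ 0 := by positivity
        have h6 : HasDerivAt (fun u : ℝ => s^2 + e*u) e u := by
          simpa using ((hasDerivAt_id' u).const_mul e).const_add (s^2)
        have h7 : HasDerivAt (fun u : ℝ => s*(u+e)) s u := by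
          simpa using (((hasDerivAt_id u).add_const e).const_mul s)
        have h8 := h6.div h7 hden
        have hw1 : (s^2 + e*u) / (s*(u+e)) < 1 := by
          rw [div_lt_one (by positivity)]; nlinarith
        have hw2 : -1 < (s^2 + e*u) / (s*(u+e)) := by
          rw [lt_div_iff₀ (by positivity)]; nlinarith
        have h9 := (Real.hasDerivAt_arcsin hw2.ne' hw1.ne).comp u h8
        have hD := (((h2.add (h5.const_mul e)).sub (h9.const_mul k)).const_mul r).hasDerivWithinAt
          (s := Ioi u)
        convert hD using 1
        · rfl
        have e1 : Real.sqrt (1 - (u/s)^2) = t / s := by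
          rw [show 1 - (u/s)^2 = (s^2-u^2)/s^2 by field_simp]
          rw [Real.sqrt_div hT.le, Real.sqrt_sq hs.le]
        have e2 : Real.sqrt (1 - ((s^2 + e*u) / (s*(u+e)))^2) = k * t / (s*(u+e)) := by
          rw [show 1 - ((s^2 + e*u) / (s*(u+e)))^2 = ((e^2-s^2)*(s^2-u^2))/(s*(u+e))^2 by
            field_simp; ring]
          rw [Real.sqrt_div (by nlinarith), Real.sqrt_sq (by positivity),
            Real.sqrt_mul (by nlinarith)]
        rw [Real.sqrt_mul (sq_nonneg r), Real.sqrt_sq hr.le, ← hts, e1, e2]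
        have hh1 : (1:ℝ)/(t/s) * (1/s) = 1/t := by field_simp
        have hh2 : (1:ℝ)/(k*t/(s*(u+e))) * ((e*(s*(u+e)) - (s^2+e*u)*s)/(s*(u+e))^2)
            = k/(t*(u+e)) := by
          rw [show e*(s*(u+e)) - (s^2+e*u)*s = s*k^2 by linear_combination (-s)*hk2]
          field_simp
        rw [hh1, hh2]
        rw [show k * (k/(t*(u+e))) = k^2/(t*(u+e)) by ring, hk2]
        rw [div_eq_iff hue.ne', eq_comm]
        have htne : t ≠ 0 := ht0.ne'
        field_simp
        linear_combination (-1 : ℝ)*ht2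
      · exact core_integrable hr hs he
    rw [key, hF]
    have hv1 : (s^2 + e*s) / (s*(s+e)) = 1 := by
      rw [div_eq_one_iff_eq (by nlinarith : s*(s+e) ≠ 0)]; ring
    have hv2 : (s^2 + e*(-s)) / (s*(-s+e)) = -1 := by
      rw [div_eq_iff (by intro hc; nlinarith [hs, h] : s*(-s+e) ≠ 0)]; ring
    simp only [hv1, hv2]
    rw [show s^2 - s^2 = 0 by ring, show s^2 - (-s)^2 = 0 by ring, Real.sqrt_zero,
      show s/s = 1 from div_self hs.ne', show -s/s = -1 by rw [neg_div, div_self hs.ne'],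
      Real.arcsin_one, Real.arcsin_neg, Real.arcsin_one]
    ring
  · -- e = s
    subst h
    have hss : Real.sqrt (s^2 - s^2) = 0 := by rw [sub_self, Real.sqrt_zero]
    set F : ℝ → ℝ := fun u => r * (Real.sqrt (s^2 - u^2) + s * Real.arcsin (u / s)) with hF
    have key : ∫ u in (-s)..s, Real.sqrt (r ^ 2 * (s ^ 2 - u ^ 2)) / (u + s) = F s - F (-s) := by
      apply integral_eq_sub_of_hasDeriv_right_of_le (by linarith)
      · apply ContinuousOn.mul continuousOn_const
        apply ContinuousOn.add (by fun_prop)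
        exact (continuousOn_const.mul ((Real.continuous_arcsin.comp (by continuity)).continuousOn))
      · intro u hu
        obtain ⟨hu1, hu2⟩ := hu
        have hT : 0 < s^2 - u^2 := by nlinarith
        have hue : 0 < u + s := by linarith
        have ht0 : 0 < Real.sqrt (s^2 - u^2) := Real.sqrt_pos.mpr hT
        set t := Real.sqrt (s^2 - u^2) with hts
        have ht2 : t ^ 2 = s ^ 2 - u ^ 2 := Real.sq_sqrt hT.le
        have h1 : HasDerivAt (fun u : ℝ => s^2 - u^2) (-(2*u)) u := by
          simpa using ((hasDerivAt_pow 2 u).const_sub (s^2))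
        have h2 := h1.sqrt hT.ne'
        have h3 : HasDerivAt (fun u : ℝ => u / s) (1/s) u := by
          simpa using (hasDerivAt_id u).div_const s
        have h4a : u / s ≠ -1 := by
          intro hc; rw [div_eq_iff hs.ne'] at hc; nlinarith
        have h4b : u / s ≠ 1 := by
          intro hc; rw [div_eq_iff hs.ne'] at hc; nlinarith
        have h5 := (Real.hasDerivAt_arcsin h4a h4b).comp u h3
        have hD := ((h2.add (h5.const_mul s)).const_mul r).hasDerivWithinAt (s := Ioi u)
        convert hD using 1
        · rfl
        have e1 : Real.sqrt (1 - (u/s)^2) = t / s := by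
          rw [show 1 - (u/s)^2 = (s^2-u^2)/s^2 by field_simp]
          rw [Real.sqrt_div hT.le, Real.sqrt_sq hs.le]
        rw [Real.sqrt_mul (sq_nonneg r), Real.sqrt_sq hr.le, ← hts, e1]
        have hh1 : (1:ℝ)/(t/s) * (1/s) = 1/t := by field_simp
        rw [hh1, div_eq_iff hue.ne', eq_comm]
        have htne : t ≠ 0 := ht0.ne'
        field_simp
        linear_combination (-1 : ℝ)*ht2
      · exact core_integrable hr hs le_rfl
    rw [key, hF]
    simp only [hss, show s^2-(-s)^2 = 0 by ring, Real.sqrt_zero]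
    rw [show s/s = 1 from div_self hs.ne', show -s/s = -1 by rw [neg_div, div_self hs.ne'],
      Real.arcsin_one, Real.arcsin_neg, Real.arcsin_one]
    ring

theorem stmt19 (lam β : ℝ) (hlam : 0 < lam) (hβ : 0 < β) :
    let x₁ := (1 / (lam ^ 2 * β)) *
      ((1 + β) * lam + 2 - 2 * Real.sqrt (lam ^ 2 * β + lam * (β + 1) + 1))
    let x₂ := (1 / (lam ^ 2 * β)) *
      ((1 + β) * lam + 2 + 2 * Real.sqrt (lam ^ 2 * β + lam * (β + 1) + 1))
    ∀ z : ℝ, x₂ < z →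
      (1 / (2 * z * (1 + z))) * (1 - β + (2 + lam * β) * z -
          Real.sqrt ((lam * β * z) ^ 2 - 2 * β * (lam * (1 + β) + 2) * z + (β - 1) ^ 2)) =
        (∫ x in Set.Icc x₁ x₂,
            (1 / (2 * Real.pi)) *
              Real.sqrt (-(β - 1) ^ 2 + 2 * β * ((1 + β) * lam + 2) * x -
                β ^ 2 * lam ^ 2 * x ^ 2) / (x * (x + 1)) / (z - x)) +
          max (1 - β) 0 / z := by
  intro x₁ x₂ z hz
  have hL : 0 < lam ^ 2 * β := by positivity
  have hD : 0 < lam ^ 2 * β + lam * (β + 1) + 1 := by positivity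
  set d := Real.sqrt (lam ^ 2 * β + lam * (β + 1) + 1) with hddef
  have hd0 : 0 < d := Real.sqrt_pos.mpr hD
  have hd2 : d ^ 2 = lam ^ 2 * β + lam * (β + 1) + 1 := Real.sq_sqrt hD.le
  set r := lam * β with hrdef
  have hr : 0 < r := by rw [hrdef]; positivity
  set m := ((1 + β) * lam + 2) / (lam ^ 2 * β) with hmdef
  set s := 2 * d / (lam ^ 2 * β) with hsdef
  have hs : 0 < s := by rw [hsdef]; positivity
  have h2d : 2 * d ≤ (1 + β) * lam + 2 := by
    nlinarith [hd2, hd0.le, sq_nonneg (lam * (β - 1))]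
  have hms : s ≤ m := by
    rw [hsdef, hmdef, div_le_div_iff₀ hL hL]
    nlinarith [h2d, hL]
  have hm0 : 0 < m := by rw [hmdef]; positivity
  have e1 : x₁ = m - s := by
    show (1 / (lam ^ 2 * β)) * ((1 + β) * lam + 2 - 2 * d) = m - s
    rw [hmdef, hsdef]; field_simp
  have e2 : x₂ = m + s := by
    show (1 / (lam ^ 2 * β)) * ((1 + β) * lam + 2 + 2 * d) = m + s
    rw [hmdef, hsdef]; field_simp
  rw [e2] at hz
  rw [e1, e2]
  have hzpos : 0 < z := by linarith
  have hz1 : (0:ℝ) < z + 1 := by linarith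
  have hab : m - s ≤ m + s := by linarith
  have hQ : ∀ x : ℝ, -(β - 1) ^ 2 + 2 * β * ((1 + β) * lam + 2) * x - β ^ 2 * lam ^ 2 * x ^ 2
      = r ^ 2 * (s ^ 2 - (x - m) ^ 2) := by
    intro x
    rw [hrdef, hmdef, hsdef]
    field_simp
    linear_combination (-4 : ℝ) * hd2
  have hfg : ∀ x ∈ Icc (m - s) (m + s),
      1 / (2 * Real.pi) * Real.sqrt (-(β - 1) ^ 2 + 2 * β * ((1 + β) * lam + 2) * x -
          β ^ 2 * lam ^ 2 * x ^ 2) / (x * (x + 1)) / (z - x)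
      = 1 / (2 * Real.pi) *
          ((1 / z) * (Real.sqrt (r ^ 2 * (s ^ 2 - (x - m) ^ 2)) / ((x - m) + m))
          - (1 / (z + 1)) * (Real.sqrt (r ^ 2 * (s ^ 2 - (x - m) ^ 2)) / ((x - m) + (m + 1)))
          + (1 / (z * (z + 1))) * (Real.sqrt (r ^ 2 * (s ^ 2 - (m - x) ^ 2)) / ((m - x) + (z - m)))) := by
    intro x hx
    obtain ⟨hxl, hxr⟩ := hx
    rw [hQ x, show r ^ 2 * (s ^ 2 - (m - x) ^ 2) = r ^ 2 * (s ^ 2 - (x - m) ^ 2) by ring,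
      show (x - m) + m = x by ring, show (x - m) + (m + 1) = x + 1 by ring,
      show (m - x) + (z - m) = z - x by ring]
    by_cases hx0 : x = 0
    · subst hx0
      have h0 : Real.sqrt (r ^ 2 * (s ^ 2 - (0 - m) ^ 2)) = 0 := by
        rw [Real.sqrt_eq_zero']
        have h1 : s ^ 2 - (0 - m) ^ 2 ≤ 0 := by nlinarith
        nlinarith [mul_nonneg (sq_nonneg r) (neg_nonneg.mpr h1)]
      rw [h0]
      simp
    · have hxpos : 0 < x := lt_of_le_of_ne (by linarith) (Ne.symm hx0)
      have hx1 : 0 < x + 1 := by linarith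
      have hzx : 0 < z - x := by linarith
      field_simp
      ring
  have hI : (∫ x in Icc (m - s) (m + s),
        1 / (2 * Real.pi) * Real.sqrt (-(β - 1) ^ 2 + 2 * β * ((1 + β) * lam + 2) * x -
          β ^ 2 * lam ^ 2 * x ^ 2) / (x * (x + 1)) / (z - x))
      = ∫ x in (m - s)..(m + s), 1 / (2 * Real.pi) *
          ((1 / z) * (Real.sqrt (r ^ 2 * (s ^ 2 - (x - m) ^ 2)) / ((x - m) + m))
          - (1 / (z + 1)) * (Real.sqrt (r ^ 2 * (s ^ 2 - (x - m) ^ 2)) / ((x - m) + (m + 1)))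
          + (1 / (z * (z + 1))) * (Real.sqrt (r ^ 2 * (s ^ 2 - (m - x) ^ 2)) / ((m - x) + (z - m)))) := by
    rw [MeasureTheory.integral_Icc_eq_integral_Ioc, ← intervalIntegral.integral_of_le hab]
    exact intervalIntegral.integral_congr (fun x hx => hfg x (by rwa [uIcc_of_le hab] at hx))
  rw [hI]
  have i0 : IntervalIntegrable (fun x => Real.sqrt (r ^ 2 * (s ^ 2 - (x - m) ^ 2)) / ((x - m) + m))
      volume (m - s) (m + s) := by
    have h := (core_integrable hr hs hms).comp_sub_right m
    rwa [show -s + m = m - s by ring, show s + m = m + s by ring] at h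
  have i1 : IntervalIntegrable (fun x => Real.sqrt (r ^ 2 * (s ^ 2 - (x - m) ^ 2)) / ((x - m) + (m + 1)))
      volume (m - s) (m + s) := by
    have h := (core_integrable hr hs (by linarith : s ≤ m + 1)).comp_sub_right m
    rwa [show -s + m = m - s by ring, show s + m = m + s by ring] at h
  have i2 : IntervalIntegrable (fun x => Real.sqrt (r ^ 2 * (s ^ 2 - (m - x) ^ 2)) / ((m - x) + (z - m)))
      volume (m - s) (m + s) := by
    have h := (core_integrable hr hs (by linarith : s ≤ z - m)).comp_sub_left m
    rw [show m - -s = m + s by ring] at h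
    exact h.symm

  have split : (∫ x in (m - s)..(m + s), 1 / (2 * Real.pi) *
          ((1 / z) * (Real.sqrt (r ^ 2 * (s ^ 2 - (x - m) ^ 2)) / ((x - m) + m))
          - (1 / (z + 1)) * (Real.sqrt (r ^ 2 * (s ^ 2 - (x - m) ^ 2)) / ((x - m) + (m + 1)))
          + (1 / (z * (z + 1))) * (Real.sqrt (r ^ 2 * (s ^ 2 - (m - x) ^ 2)) / ((m - x) + (z - m)))))
      = 1 / (2 * Real.pi) *
          ((1 / z) * (∫ x in (m - s)..(m + s), Real.sqrt (r ^ 2 * (s ^ 2 - (x - m) ^ 2)) / ((x - m) + m))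
          - (1 / (z + 1)) * (∫ x in (m - s)..(m + s), Real.sqrt (r ^ 2 * (s ^ 2 - (x - m) ^ 2)) / ((x - m) + (m + 1)))
          + (1 / (z * (z + 1))) * (∫ x in (m - s)..(m + s), Real.sqrt (r ^ 2 * (s ^ 2 - (m - x) ^ 2)) / ((m - x) + (z - m)))) := by
    rw [intervalIntegral.integral_const_mul,
      intervalIntegral.integral_add ((i0.const_mul _).sub (i1.const_mul _)) (i2.const_mul _),
      intervalIntegral.integral_sub (i0.const_mul _) (i1.const_mul _),
      intervalIntegral.integral_const_mul, intervalIntegral.integral_const_mul,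
      intervalIntegral.integral_const_mul]
  rw [split]
  have v0 : (∫ x in (m - s)..(m + s), Real.sqrt (r ^ 2 * (s ^ 2 - (x - m) ^ 2)) / ((x - m) + m))
      = π * r * (m - Real.sqrt (m ^ 2 - s ^ 2)) := by
    have h := intervalIntegral.integral_comp_sub_right
      (a := m - s) (b := m + s) (fun u => Real.sqrt (r ^ 2 * (s ^ 2 - u ^ 2)) / (u + m)) m
    rw [show m - s - m = -s by ring, show m + s - m = s by ring] at h
    exact h.trans (core_value hr hs hms)
  have v1 : (∫ x in (m - s)..(m + s), Real.sqrt (r ^ 2 * (s ^ 2 - (x - m) ^ 2)) / ((x - m) + (m + 1)))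
      = π * r * ((m + 1) - Real.sqrt ((m + 1) ^ 2 - s ^ 2)) := by
    have h := intervalIntegral.integral_comp_sub_right
      (a := m - s) (b := m + s) (fun u => Real.sqrt (r ^ 2 * (s ^ 2 - u ^ 2)) / (u + (m + 1))) m
    rw [show m - s - m = -s by ring, show m + s - m = s by ring] at h
    exact h.trans (core_value hr hs (by linarith))
  have v2 : (∫ x in (m - s)..(m + s), Real.sqrt (r ^ 2 * (s ^ 2 - (m - x) ^ 2)) / ((m - x) + (z - m)))
      = π * r * ((z - m) - Real.sqrt ((z - m) ^ 2 - s ^ 2)) := by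
    have h := intervalIntegral.integral_comp_sub_left
      (a := m - s) (b := m + s) (fun u => Real.sqrt (r ^ 2 * (s ^ 2 - u ^ 2)) / (u + (z - m))) m
    rw [show m - (m + s) = -s by ring, show m - (m - s) = s by ring] at h
    exact h.trans (core_value hr hs (by linarith))
  rw [v0, v1, v2]
  have w0 : Real.sqrt (m ^ 2 - s ^ 2) = |β - 1| / r := by
    rw [show m ^ 2 - s ^ 2 = ((β - 1) / r) ^ 2 by
      rw [eq_comm, div_pow, div_eq_iff (pow_ne_zero 2 hr.ne')]
      linear_combination (-1 : ℝ) * hQ 0]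
    rw [Real.sqrt_sq_eq_abs, abs_div, abs_of_pos hr]
  have w1 : Real.sqrt ((m + 1) ^ 2 - s ^ 2) = (1 + β + lam * β) / r := by
    rw [show (m + 1) ^ 2 - s ^ 2 = ((1 + β + lam * β) / r) ^ 2 by
      rw [eq_comm, div_pow, div_eq_iff (pow_ne_zero 2 hr.ne')]
      linear_combination (-1 : ℝ) * hQ (-1)]
    rw [Real.sqrt_sq (by positivity)]
  have w2 : Real.sqrt ((r * z) ^ 2 - 2 * β * (lam * (1 + β) + 2) * z + (β - 1) ^ 2)
      = r * Real.sqrt ((z - m) ^ 2 - s ^ 2) := by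
    rw [show (r * z) ^ 2 - 2 * β * (lam * (1 + β) + 2) * z + (β - 1) ^ 2
        = r ^ 2 * ((z - m) ^ 2 - s ^ 2) by linear_combination (-1 : ℝ) * hQ z]
    rw [Real.sqrt_mul (sq_nonneg r), Real.sqrt_sq hr.le]
  rw [w0, w1, w2]
  have hpi : Real.pi ≠ 0 := Real.pi_ne_zero
  rcases le_total β 1 with hb | hb
  · rw [abs_of_nonpos (by linarith), max_eq_left (by linarith)]
    field_simp
    ring
  · rw [abs_of_nonneg (by linarith), max_eq_right (by linarith)]
    field_simp
    ring
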